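/- Let α > 1 and b > 0 be reals, and let x* = (b/(α−1))^(1/α). For all reals x > 0 and y > 0 with x + y ≤ x*, it holds that (x^α + b) + (y^α + b) > (x+y)^α + b. (Merging two machines whose combined load is at most x* strictly decreases the total power consumption.) -/

import Mathlib

/-- For α > 1, b > 0, x* = (b/(α−1))^(1/α), and x, y > 0 with
x + y ≤ x*, merging strictly decreases the power:
(x^α + b) + (y^α + b) > (x+y)^α + b. -/
theorem stmt1 (α b : ℝ) (hα : 1 < α) (hb : 0 < b)
    (x y : ℝ) (hx : 0 < x) (hy : 0 < y)
    (hxy : x + y ≤ (b / (α - 1)) ^ (1 / α)) :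
    (x ^ α + b) + (y ^ α + b) > (x + y) ^ α + b := by
  have hα0 : (0:ℝ) < α := by linarith
  have hs : (0:ℝ) < x + y := by linarith
  have hba : (0:ℝ) < b / (α - 1) := by
    apply div_pos hb; linarith
  -- (x+y)^α ≤ b/(α-1)
  have h1 : (x + y) ^ α ≤ b / (α - 1) := by
    have := Real.rpow_le_rpow hs.le hxy hα0.le
    rwa [one_div, Real.rpow_inv_rpow hba.le hα0.ne'] at this
  -- power mean: (x+y)^α ≤ 2^(α-1) * (x^α + y^α)
  have h2 : (x + y) ^ α ≤ 2 ^ (α - 1) * (x ^ α + y ^ α) := by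
    have := NNReal.rpow_add_le_mul_rpow_add_rpow ⟨x, hx.le⟩ ⟨y, hy.le⟩ hα.le
    have h' := NNReal.coe_le_coe.2 this
    push_cast at h'
    convert h' using 3 <;> rfl
  -- hence x^α + y^α ≥ 2^(1-α) * (x+y)^α
  have h2pos : (0:ℝ) < (2:ℝ) ^ (α - 1) := Real.rpow_pos_of_pos two_pos _
  have h3 : 2 ^ (1 - α) * (x + y) ^ α ≤ x ^ α + y ^ α := by
    rw [show (1 - α) = -(α - 1) by ring, Real.rpow_neg (by norm_num)]
    rw [inv_mul_le_iff₀ h2pos] at *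
    linarith [h2]
  -- 2^(1-α) > 2 - α
  have h4 : (2:ℝ) - α < 2 ^ (1 - α) := by
    have hne : (1 - α) * Real.log 2 ≠ 0 := by
      have : Real.log 2 > 0 := Real.log_pos (by norm_num)
      have : (1 - α) < 0 := by linarith
      nlinarith [Real.log_pos (show (1:ℝ) < 2 by norm_num)]
    have hexp := Real.add_one_lt_exp hne
    have hrw : (2:ℝ) ^ (1 - α) = Real.exp ((1 - α) * Real.log 2) := by
      rw [Real.rpow_def_of_pos (by norm_num), mul_comm]
    have hlog : Real.log 2 < 1 := by
      have := Real.log_lt_sub_one_of_pos (show (0:ℝ) < 2 by norm_num) (by norm_num)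
      linarith
    have hlogpos : 0 < Real.log 2 := Real.log_pos (by norm_num)
    rw [hrw]
    nlinarith
  have hspos : (0:ℝ) < (x + y) ^ α := Real.rpow_pos_of_pos hs _
  -- x^α + y^α > (2-α) (x+y)^α
  have h5 : (2 - α) * (x + y) ^ α < x ^ α + y ^ α := by
    calc (2 - α) * (x + y) ^ α < 2 ^ (1 - α) * (x + y) ^ α := by
          exact mul_lt_mul_of_pos_right h4 hspos
      _ ≤ x ^ α + y ^ α := h3
  -- conclude
  have h6 : (α - 1) * (x + y) ^ α ≤ b := by
    have := mul_le_mul_of_nonneg_left h1 (show (0:ℝ) ≤ α - 1 by linarith)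
    rwa [mul_div_cancel₀ b (show α - 1 ≠ 0 by linarith)] at this
  nlinarith
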